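/- Suppose the monic real cubic F(ξ) = ξ³ + A₁ξ² + A₂ξ + A₃ satisfies D(F) < 0, A₁ ≥ 0, A₂ ≥ 0, A₃ > 0, and let 0 < m < 2/3. Then every root ξ of F (real or complex) satisfies |arg(ξ)| > mπ/2. -/

import Mathlib

/-- If `D(F) < 0`, `A₁ ≥ 0`, `A₂ ≥ 0`, `A₃ > 0` and `0 < m < 2/3`, then every
root `ξ` of the monic real cubic satisfies `|arg ξ| > mπ/2`. -/
theorem stmt_16 (A₁ A₂ A₃ m : ℝ)
    (hD : 18*A₁*A₂*A₃ + (A₁*A₂)^2 - 4*A₃*A₁^3 - 4*A₂^3 - 27*A₃^2 < 0)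
    (hA₁ : 0 ≤ A₁) (hA₂ : 0 ≤ A₂) (hA₃ : 0 < A₃)
    (hm : 0 < m) (hm' : m < 2/3) :
    ∀ ξ : ℂ, ξ^3 + (A₁:ℂ)*ξ^2 + (A₂:ℂ)*ξ + (A₃:ℂ) = 0 →
      m * Real.pi / 2 < |Complex.arg ξ| := by
  intro ξ h
  have hpi := Real.pi_pos
  -- ξ ≠ 0
  have hξ0 : ξ ≠ 0 := by
    intro h0
    rw [h0] at h
    simp at h
    exact hA₃.ne' h
  -- real and imaginary parts of the equation
  have hre := congrArg Complex.re h
  have him := congrArg Complex.im h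
  simp [Complex.add_re, Complex.add_im, Complex.mul_re, Complex.mul_im, pow_succ,
    Complex.ofReal_re, Complex.ofReal_im] at hre him
  set β := ξ.re with hβ
  set γ := ξ.im with hγ
  -- key claim: re ξ ≤ |ξ| / 2
  have habs : (0 : ℝ) < ‖ξ‖ := by
    exact norm_pos_iff.mpr hξ0
  have hsq : (‖ξ‖)^2 = β^2 + γ^2 := by
    rw [Complex.sq_norm, Complex.normSq_apply]; ring
  have hkey : β ≤ ‖ξ‖ / 2 := by
    rcases le_or_gt β 0 with hb | hb
    · linarith
    · rcases eq_or_ne γ 0 with hg | hg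
      · exfalso
        rw [hg] at hre
        nlinarith [pow_pos hb 3, pow_pos hb 2, mul_nonneg hA₁ (sq_nonneg β),
          mul_nonneg hA₂ hb.le]
      · -- from imaginary part: γ² = 3β² + 2A₁β + A₂ ≥ 3β²
        have hfac : γ * (3*β^2 + 2*A₁*β + A₂ - γ^2) = 0 := by
          linear_combination him
        have hγ2 : γ^2 = 3*β^2 + 2*A₁*β + A₂ := by
          have h0 := (mul_eq_zero.mp hfac).resolve_left hg
          linarith
        have h3 : 3*β^2 ≤ γ^2 := by nlinarith [mul_nonneg hA₁ hb.le]
        have h4 : (2*β)^2 ≤ (‖ξ‖)^2 := by nlinarith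
        nlinarith [habs]
  -- hence cos (arg ξ) ≤ 1/2
  have hcos : Real.cos (Complex.arg ξ) ≤ 1/2 := by
    rw [Complex.cos_arg hξ0]
    rw [div_le_iff₀ habs]
    calc β ≤ ‖ξ‖ / 2 := hkey
    _ = 1/2 * ‖ξ‖ := by ring
  -- hence π/3 ≤ |arg ξ|
  have harg : Real.pi / 3 ≤ |Complex.arg ξ| := by
    by_contra hlt
    push_neg at hlt
    have h1 : Real.cos (Real.pi / 3) < Real.cos |Complex.arg ξ| := by
      apply Real.cos_lt_cos_of_nonneg_of_le_pi (abs_nonneg _) (by linarith) hlt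
    rw [Real.cos_abs, Real.cos_pi_div_three] at h1
    linarith
  have : m * Real.pi / 2 < Real.pi / 3 := by nlinarith
  linarith
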